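/- For d ≥ 2 and E ⊆ 𝔽_q^d, the sum over all affine hyperplanes h of (|h ∩ E| − |E|/q)² is at most q^{d−1}·|E|. -/

import Mathlib

open Finset
open scoped Classical

lemma sum_single_add {F : Type*} [Field F] {d : ℕ} (v e : Fin d → F) (j : Fin d) (a : F) :
    ∑ i, (e + (Pi.single j a : Fin d → F)) i * v i = (∑ i, e i * v i) + a * v j := by
  have h1 : ∀ i, (e + (Pi.single j a : Fin d → F)) i * v i
      = e i * v i + (Pi.single j a : Fin d → F) i * v i := by
    intro i; simp [add_mul]
  rw [Finset.sum_congr rfl (fun i _ => h1 i), Finset.sum_add_distrib]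
  congr 1
  rw [Finset.sum_eq_single j]
  · simp
  · intro b _ hb; simp [Pi.single_eq_of_ne hb]
  · simp

lemma card_fiber_eq {F : Type*} [Field F] [Fintype F] [DecidableEq F] {d : ℕ}
    (v : Fin d → F) (hv : v ≠ 0) (t : F) :
    (univ.filter (fun e : Fin d → F => ∑ i, e i * v i = t)).card
      = Fintype.card F ^ (d - 1) := by
  obtain ⟨j, hj0⟩ := Function.ne_iff.mp hv
  have hj : v j ≠ 0 := hj0
  have hall : ∀ s r : F,
      (univ.filter (fun e : Fin d → F => ∑ i, e i * v i = s)).card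
      = (univ.filter (fun e : Fin d → F => ∑ i, e i * v i = r)).card := by
    intro s r
    apply Finset.card_nbij' (fun e => e + (Pi.single j ((r - s) / v j) : Fin d → F))
      (fun e => e + (Pi.single j ((s - r) / v j) : Fin d → F))
    · intro e he
      simp only [mem_coe, mem_filter, mem_univ, true_and] at he ⊢
      rw [sum_single_add, he, div_mul_cancel₀ _ hj]; ring
    · intro e he
      simp only [mem_coe, mem_filter, mem_univ, true_and] at he ⊢
      rw [sum_single_add, he, div_mul_cancel₀ _ hj]; ring
    · intro e _; funext i
      by_cases h : i = j
      · simp [h, Pi.single_apply]; ring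
      · simp [h, Pi.single_apply]
    · intro e _; funext i
      by_cases h : i = j
      · simp [h, Pi.single_apply]; ring
      · simp [h, Pi.single_apply]
  have hsum : ∑ t : F, (univ.filter (fun e : Fin d → F => ∑ i, e i * v i = t)).card
      = Fintype.card F ^ d := by
    rw [← Finset.card_eq_sum_card_fiberwise (f := fun e : Fin d → F => ∑ i, e i * v i)
      (fun x _ => Finset.mem_univ _)]
    simp [Fintype.card_fun]
  have hconst : ∑ s : F, (univ.filter (fun e : Fin d → F => ∑ i, e i * v i = s)).card
      = Fintype.card F * (univ.filter (fun e : Fin d → F => ∑ i, e i * v i = t)).card := by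
    rw [Finset.sum_congr rfl (fun s _ => hall s t)]
    simp [mul_comm]
  have hq : 0 < Fintype.card F := Fintype.card_pos
  have hpow : Fintype.card F ^ d = Fintype.card F * Fintype.card F ^ (d - 1) := by
    have h1 : d - 1 + 1 = d := Nat.sub_add_cancel j.pos
    calc Fintype.card F ^ d = Fintype.card F ^ (d - 1 + 1) := by rw [h1]
      _ = Fintype.card F ^ (d - 1) * Fintype.card F := pow_succ _ _
      _ = Fintype.card F * Fintype.card F ^ (d - 1) := mul_comm _ _
  have key : Fintype.card F * (univ.filter (fun e : Fin d → F => ∑ i, e i * v i = t)).card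
      = Fintype.card F * Fintype.card F ^ (d - 1) := by
    rw [← hconst, hsum, hpow]
  exact Nat.eq_of_mul_eq_mul_left hq key

-- count of nonzero e with x·e = y·e
lemma card_pair_count {F : Type*} [Field F] [Fintype F] [DecidableEq F] {d : ℕ} (hd : 1 ≤ d)
    (x y : Fin d → F) :
    ((univ.filter (fun e : Fin d → F => e ≠ 0)).filter
        (fun e => ∑ i, x i * e i = ∑ i, y i * e i)).card
      = if x = y then Fintype.card F ^ d - 1 else Fintype.card F ^ (d - 1) - 1 := by
  classical
  by_cases hxy : x = y
  · subst hxy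
    rw [if_pos rfl, Finset.filter_true_of_mem (fun _ _ => rfl)]
    have h2 : (univ.filter (fun e : Fin d → F => e ≠ 0)) = (univ : Finset (Fin d → F)).erase 0 := by
      ext e; simp [Finset.mem_erase, and_comm]
    rw [h2, Finset.card_erase_of_mem (mem_univ _), Finset.card_univ, Fintype.card_fun,
      Fintype.card_fin]
  · rw [if_neg hxy]
    have hv : (x - y) ≠ 0 := sub_ne_zero.mpr hxy
    have key : ((univ.filter (fun e : Fin d → F => e ≠ 0)).filter
        (fun e => ∑ i, x i * e i = ∑ i, y i * e i))
        = (univ.filter (fun e : Fin d → F => ∑ i, e i * (x - y) i = 0)).erase 0 := by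
      ext e
      simp only [mem_filter, mem_univ, true_and, mem_erase]
      constructor
      · rintro ⟨he, heq⟩
        refine ⟨he, ?_⟩
        have : ∀ i, e i * (x - y) i = x i * e i - y i * e i := by
          intro i; simp [Pi.sub_apply]; ring
        rw [Finset.sum_congr rfl (fun i _ => this i), Finset.sum_sub_distrib, heq, sub_self]
      · rintro ⟨he, heq⟩
        refine ⟨he, ?_⟩
        have : ∀ i, e i * (x - y) i = x i * e i - y i * e i := by
          intro i; simp [Pi.sub_apply]; ring
        rw [Finset.sum_congr rfl (fun i _ => this i), Finset.sum_sub_distrib] at heq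
        exact sub_eq_zero.mp heq
    rw [key, Finset.card_erase_of_mem, card_fiber_eq (x - y) hv 0]
    · simp [mem_filter]

-- step 2: per-e inner sum identity
lemma inner_sum_eq {F : Type*} [Field F] [Fintype F] [DecidableEq F] {d : ℕ}
    (q : ℕ) (hq : Fintype.card F = q) (hq2 : 2 ≤ q) (E : Finset (Fin d → F)) (e : Fin d → F) :
    ∑ t : F, ((((univ.filter (fun x : Fin d → F => ∑ i, x i * e i = t)) ∩ E).card : ℝ)
        - (E.card : ℝ) / q) ^ 2
      = ((((E ×ˢ E).filter
            (fun z : (Fin d → F) × (Fin d → F) =>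
              ∑ i, z.1 i * e i = ∑ i, z.2 i * e i)).card : ℝ))
        - (E.card : ℝ) ^ 2 / q := by
  classical
  have hEt : ∀ t : F, (univ.filter (fun x : Fin d → F => ∑ i, x i * e i = t)) ∩ E
      = E.filter (fun x => ∑ i, x i * e i = t) := by
    intro t; ext x; simp [and_comm]
  have ha : ∑ t : F, ((E.filter (fun x => ∑ i, x i * e i = t)).card : ℝ) = E.card := by
    rw [← Nat.cast_sum]
    congr 1
    exact (Finset.card_eq_sum_card_fiberwise
      (f := fun x : Fin d → F => ∑ i, x i * e i) (fun x _ => mem_univ _)).symm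
  have hb : ∑ t : F, ((E.filter (fun x => ∑ i, x i * e i = t)).card : ℝ) ^ 2
      = (((E ×ˢ E).filter
            (fun z : (Fin d → F) × (Fin d → F) =>
              ∑ i, z.1 i * e i = ∑ i, z.2 i * e i)).card : ℝ) := by
    have hsq : ∀ t : F, ((E.filter (fun x => ∑ i, x i * e i = t)).card) ^ 2
        = (((E ×ˢ E).filter (fun z : (Fin d → F) × (Fin d → F) =>
            (∑ i, z.1 i * e i = t) ∧ (∑ i, z.2 i * e i = t))).card) := by
      intro t
      have hps : (E ×ˢ E).filter (fun z : (Fin d → F) × (Fin d → F) =>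
            (∑ i, z.1 i * e i = t) ∧ (∑ i, z.2 i * e i = t))
          = (E.filter (fun x => ∑ i, x i * e i = t)) ×ˢ (E.filter (fun x => ∑ i, x i * e i = t)) := by
        ext z
        simp only [mem_filter, mem_product]
        tauto
      rw [hps, Finset.card_product, sq]
    have hfib : ((E ×ˢ E).filter
          (fun z : (Fin d → F) × (Fin d → F) =>
            ∑ i, z.1 i * e i = ∑ i, z.2 i * e i)).card
        = ∑ t : F, (((E ×ˢ E).filter (fun z : (Fin d → F) × (Fin d → F) =>
            (∑ i, z.1 i * e i = t) ∧ (∑ i, z.2 i * e i = t))).card) := by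
      rw [Finset.card_eq_sum_card_fiberwise
        (f := fun z : (Fin d → F) × (Fin d → F) => ∑ i, z.1 i * e i)
        (fun x _ => mem_univ _)]
      congr 1; funext t
      congr 1
      rw [Finset.filter_filter]
      apply Finset.filter_congr
      intro z _
      constructor
      · rintro ⟨h1, h2⟩; exact ⟨h2, h1 ▸ h2⟩
      · rintro ⟨h1, h2⟩; exact ⟨h1.trans h2.symm, h1⟩
    rw [hfib, Nat.cast_sum]
    exact Finset.sum_congr rfl (fun t _ => by rw [← Nat.cast_pow, hsq t])
  have hcard : (Finset.univ : Finset F).card = q := by rw [Finset.card_univ, hq]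
  have hqR : (q : ℝ) ≠ 0 := by positivity
  calc ∑ t : F, ((((univ.filter (fun x : Fin d → F => ∑ i, x i * e i = t)) ∩ E).card : ℝ)
        - (E.card : ℝ) / q) ^ 2
      = ∑ t : F, (((E.filter (fun x => ∑ i, x i * e i = t)).card : ℝ) ^ 2
          - 2 * ((E.card : ℝ) / q) * ((E.filter (fun x => ∑ i, x i * e i = t)).card : ℝ)
          + ((E.card : ℝ) / q) ^ 2) := by
        apply Finset.sum_congr rfl
        intro t _
        rw [hEt t]; ring
    _ = (∑ t : F, ((E.filter (fun x => ∑ i, x i * e i = t)).card : ℝ) ^ 2)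
          - 2 * ((E.card : ℝ) / q) * (∑ t : F, ((E.filter (fun x => ∑ i, x i * e i = t)).card : ℝ))
          + q * ((E.card : ℝ) / q) ^ 2 := by
        rw [Finset.sum_add_distrib, Finset.sum_sub_distrib, ← Finset.mul_sum,
          Finset.sum_const, hcard, nsmul_eq_mul]
    _ = _ := by
        rw [ha, hb]
        field_simp
        ring

lemma sum_Ne {F : Type*} [Field F] [Fintype F] [DecidableEq F] {d : ℕ}
    (q : ℕ) (hq : Fintype.card F = q) (hq2 : 2 ≤ q) (hd : 1 ≤ d) (E : Finset (Fin d → F)) :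
    ∑ e ∈ univ.filter (fun e : Fin d → F => e ≠ 0),
        ((((E ×ˢ E).filter (fun z : (Fin d → F) × (Fin d → F) =>
            ∑ i, z.1 i * e i = ∑ i, z.2 i * e i)).card : ℝ))
      = (E.card : ℝ) ^ 2 * ((q : ℝ) ^ (d - 1) - 1)
        + (E.card : ℝ) * ((q : ℝ) ^ d - (q : ℝ) ^ (d - 1)) := by
  classical
  have h1 : ∀ e : Fin d → F,
      ((((E ×ˢ E).filter (fun z : (Fin d → F) × (Fin d → F) =>
          ∑ i, z.1 i * e i = ∑ i, z.2 i * e i)).card : ℝ))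
      = ∑ z ∈ E ×ˢ E, if (∑ i, z.1 i * e i = ∑ i, z.2 i * e i) then (1 : ℝ) else 0 := by
    intro e; rw [Finset.sum_boole]
  rw [Finset.sum_congr rfl (fun e _ => h1 e), Finset.sum_comm]
  have h2 : ∀ z : (Fin d → F) × (Fin d → F),
      ∑ e ∈ univ.filter (fun e : Fin d → F => e ≠ 0),
          (if (∑ i, z.1 i * e i = ∑ i, z.2 i * e i) then (1 : ℝ) else 0)
      = if z.1 = z.2 then ((q : ℝ) ^ d - 1) else ((q : ℝ) ^ (d - 1) - 1) := by
    intro z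
    rw [Finset.sum_boole, card_pair_count hd z.1 z.2, hq]
    have e1 : (1 : ℕ) ≤ q ^ d := Nat.one_le_pow _ _ (by omega)
    have e2 : (1 : ℕ) ≤ q ^ (d - 1) := Nat.one_le_pow _ _ (by omega)
    split_ifs with h
    · push_cast [Nat.cast_sub e1]; ring
    · push_cast [Nat.cast_sub e2]; ring
  rw [Finset.sum_congr rfl (fun z _ => h2 z)]
  have h3 : ∀ z : (Fin d → F) × (Fin d → F),
      (if z.1 = z.2 then ((q : ℝ) ^ d - 1) else ((q : ℝ) ^ (d - 1) - 1))
      = ((q : ℝ) ^ (d - 1) - 1)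
        + (if z.1 = z.2 then ((q : ℝ) ^ d - (q : ℝ) ^ (d - 1)) else 0) := by
    intro z; split_ifs <;> ring
  rw [Finset.sum_congr rfl (fun z _ => h3 z), Finset.sum_add_distrib, Finset.sum_const,
    Finset.card_product, nsmul_eq_mul]
  have h4 : ∑ z ∈ E ×ˢ E, (if z.1 = z.2 then ((q : ℝ) ^ d - (q : ℝ) ^ (d - 1)) else 0)
      = (E.card : ℝ) * ((q : ℝ) ^ d - (q : ℝ) ^ (d - 1)) := by
    rw [Finset.sum_product]
    have : ∀ x ∈ E, ∑ y ∈ E, (if x = y then ((q : ℝ) ^ d - (q : ℝ) ^ (d - 1)) else 0)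
        = ((q : ℝ) ^ d - (q : ℝ) ^ (d - 1)) := by
      intro x hx
      rw [Finset.sum_ite_eq E x (fun _ => ((q : ℝ) ^ d - (q : ℝ) ^ (d - 1))), if_pos hx]
    rw [Finset.sum_congr rfl this, Finset.sum_const, nsmul_eq_mul]
  rw [h4]
  push_cast
  ring

lemma fiber_card_ge {F : Type*} [Field F] [Fintype F] [DecidableEq F] {d : ℕ}
    (q : ℕ) (hq : Fintype.card F = q) (h : Finset (Fin d → F))
    (e : Fin d → F) (he : e ≠ 0) (t : F)
    (hh : univ.filter (fun x : Fin d → F => ∑ i, x i * e i = t) = h) :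
    q - 1 ≤ ((((univ.filter (fun e : Fin d → F => e ≠ 0)) ×ˢ (univ : Finset F)).filter
        (fun p : (Fin d → F) × F =>
          univ.filter (fun x : Fin d → F => ∑ i, x i * p.1 i = p.2) = h)).card : ℕ) := by
  classical
  have hcard : (univ.filter (fun c : F => c ≠ 0)).card = q - 1 := by
    have : (univ.filter (fun c : F => c ≠ 0)) = (univ : Finset F).erase 0 := by
      ext c; simp [and_comm]
    rw [this, Finset.card_erase_of_mem (mem_univ _), Finset.card_univ, hq]
  rw [← hcard]
  apply Finset.card_le_card_of_injOn (fun c => (c • e, c * t))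
  · intro c hc
    simp only [mem_coe, mem_filter, mem_univ, true_and] at hc
    simp only [mem_coe, mem_filter, mem_product, mem_univ, true_and, and_true]
    constructor
    · exact smul_ne_zero hc he
    · rw [← hh]
      ext x
      simp only [mem_filter, mem_univ, true_and]
      have hsum : ∑ i, x i * (c • e) i = c * ∑ i, x i * e i := by
        rw [Finset.mul_sum]
        exact Finset.sum_congr rfl (fun i _ => by simp [Pi.smul_apply, smul_eq_mul]; ring)
      rw [hsum]
      exact ⟨fun hcc => mul_left_cancel₀ hc hcc, fun hcc => by rw [hcc]⟩
  · intro c1 h1 c2 h2 heq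
    obtain ⟨i0, hi0⟩ := Function.ne_iff.mp he
    have hi0' : e i0 ≠ 0 := hi0
    have : c1 * e i0 = c2 * e i0 := by
      have := congrArg (fun p : (Fin d → F) × F => p.1 i0) heq
      simpa [Pi.smul_apply, smul_eq_mul] using this
    exact mul_right_cancel₀ hi0' this

/-- An affine hyperplane in `𝔽_q^d`: the solution set of `x ⬝ e = t` for some `e ≠ 0`. -/
def IsHyperplane {F : Type*} [Field F] [Fintype F] [DecidableEq F] {d : ℕ}
    (h : Finset (Fin d → F)) : Prop :=
  ∃ e : Fin d → F, e ≠ 0 ∧ ∃ t : F,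
    h = Finset.univ.filter (fun x : Fin d → F => ∑ i, x i * e i = t)

theorem variance_hyperplanes
    {F : Type*} [Field F] [Fintype F] [DecidableEq F] (q : ℕ) (hq : Fintype.card F = q)
    (d : ℕ) (hd : 2 ≤ d) (E : Finset (Fin d → F)) :
    ∑ h ∈ Finset.univ.filter (fun h : Finset (Fin d → F) => IsHyperplane h),
        (((h ∩ E).card : ℝ) - (E.card : ℝ) / q) ^ 2
      ≤ (q : ℝ) ^ (d - 1) * E.card := by
  classical
  have hq2 : 2 ≤ q := by rw [← hq]; exact Fintype.one_lt_card
  have hd1 : 1 ≤ d := by omega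
  set N : Finset (Fin d → F) := univ.filter (fun e : Fin d → F => e ≠ 0) with hN
  set P : Finset ((Fin d → F) × F) := N ×ˢ (univ : Finset F) with hP
  set g : (Fin d → F) × F → Finset (Fin d → F) :=
    fun p => univ.filter (fun x : Fin d → F => ∑ i, x i * p.1 i = p.2) with hg
  set f : Finset (Fin d → F) → ℝ :=
    fun h => (((h ∩ E).card : ℝ) - (E.card : ℝ) / q) ^ 2 with hf
  have hf0 : ∀ h, 0 ≤ f h := fun h => sq_nonneg _
  -- image of g on P is the set of hyperplanes
  have himg : P.image g = univ.filter (fun h : Finset (Fin d → F) => IsHyperplane h) := by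
    ext h
    simp only [mem_image, mem_filter, mem_univ, true_and, hP, hg, hN, Finset.mem_product,
      mem_filter, mem_univ, true_and]
    constructor
    · rintro ⟨⟨e, t⟩, ⟨he, -⟩, rfl⟩
      exact ⟨e, he, t, rfl⟩
    · rintro ⟨e, he, t, rfl⟩
      exact ⟨⟨e, t⟩, ⟨he, trivial⟩, rfl⟩
  -- grouping
  have hgroup : ∑ p ∈ P, f (g p)
      = ∑ h ∈ P.image g, ((P.filter (fun p => g p = h)).card : ℝ) * f h := by
    rw [← Finset.sum_fiberwise_of_maps_to (fun p hp => Finset.mem_image_of_mem g hp)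
      (fun p => f (g p))]
    apply Finset.sum_congr rfl
    intro h hh
    have : ∀ p ∈ P.filter (fun p => g p = h), f (g p) = f h := by
      intro p hp
      rw [(Finset.mem_filter.mp hp).2]
    rw [Finset.sum_congr rfl this, Finset.sum_const, nsmul_eq_mul]
  -- lower bound on fibers
  have hfiber : ∀ h ∈ P.image g, ((q : ℝ) - 1) * f h
      ≤ ((P.filter (fun p => g p = h)).card : ℝ) * f h := by
    intro h hh
    apply mul_le_mul_of_nonneg_right _ (hf0 h)
    obtain ⟨⟨e, t⟩, hp, hgp⟩ := Finset.mem_image.mp hh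
    simp only [hP, hN, Finset.mem_product, mem_filter, mem_univ, true_and, and_true] at hp
    have hle : q - 1 ≤ (P.filter (fun p => g p = h)).card :=
      fiber_card_ge q hq h e hp t hgp
    calc ((q : ℝ) - 1) = ((q - 1 : ℕ) : ℝ) := by
          rw [Nat.cast_sub (by omega)]; norm_num
      _ ≤ _ := Nat.cast_le.mpr hle
  -- step 1 conclusion
  have step1 : ((q : ℝ) - 1) * ∑ h ∈ univ.filter (fun h : Finset (Fin d → F) => IsHyperplane h), f h
      ≤ ∑ p ∈ P, f (g p) := by
    rw [hgroup, ← himg, Finset.mul_sum]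
    exact Finset.sum_le_sum hfiber
  -- step 2+3: compute the pair sum
  have hNe : ∑ p ∈ P, f (g p)
      = (E.card : ℝ) ^ 2 * ((q : ℝ) ^ (d - 1) - 1)
        + (E.card : ℝ) * ((q : ℝ) ^ d - (q : ℝ) ^ (d - 1))
        - (N.card : ℝ) * ((E.card : ℝ) ^ 2 / q) := by
    rw [hP, Finset.sum_product]
    have : ∀ e ∈ N, ∑ t : F, f (g (e, t))
        = ((((E ×ˢ E).filter (fun z : (Fin d → F) × (Fin d → F) =>
            ∑ i, z.1 i * e i = ∑ i, z.2 i * e i)).card : ℝ)) - (E.card : ℝ) ^ 2 / q := by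
      intro e _
      exact inner_sum_eq q hq hq2 E e
    rw [Finset.sum_congr rfl this, Finset.sum_sub_distrib, Finset.sum_const, nsmul_eq_mul,
      sum_Ne q hq hq2 hd1 E]
  have hNcard : (N.card : ℝ) = (q : ℝ) ^ d - 1 := by
    have : N = (univ : Finset (Fin d → F)).erase 0 := by
      ext e; simp [hN, and_comm]
    rw [this, Finset.card_erase_of_mem (mem_univ _), Finset.card_univ, Fintype.card_fun,
      Fintype.card_fin, hq, Nat.cast_sub (Nat.one_le_pow _ _ (by omega))]
    push_cast; ring
  -- final algebra
  have hpow : (q : ℝ) ^ d = (q : ℝ) ^ (d - 1) * q := by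
    rw [← pow_succ]
    congr 1; omega
  have hqR : (0 : ℝ) < q := by positivity
  have hq1R : (0 : ℝ) < (q : ℝ) - 1 := by
    have : (2 : ℝ) ≤ q := by exact_mod_cast hq2
    linarith
  have hE0 : (0 : ℝ) ≤ (E.card : ℝ) := Nat.cast_nonneg _
  have step2 : ∑ p ∈ P, f (g p) ≤ ((q : ℝ) - 1) * ((q : ℝ) ^ (d - 1) * E.card) := by
    rw [hNe, hNcard, hpow]
    have hne : (q : ℝ) ≠ 0 := ne_of_gt hqR
    have heq : (E.card : ℝ) ^ 2 * ((q : ℝ) ^ (d - 1) - 1)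
        + (E.card : ℝ) * ((q : ℝ) ^ (d - 1) * q - (q : ℝ) ^ (d - 1))
        - ((q : ℝ) ^ (d - 1) * q - 1) * ((E.card : ℝ) ^ 2 / q)
        = ((q : ℝ) - 1) * ((q : ℝ) ^ (d - 1) * E.card)
          - ((q : ℝ) - 1) * (E.card : ℝ) ^ 2 / q := by
      field_simp
      ring
    rw [heq]
    have hnn : 0 ≤ ((q : ℝ) - 1) * (E.card : ℝ) ^ 2 / q :=
      div_nonneg (mul_nonneg hq1R.le (sq_nonneg _)) hqR.le
    linarith
  have := le_trans step1 step2
  exact le_of_mul_le_mul_left (by linarith [this]) hq1R
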